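/- If ‖·‖ = ‖·‖_e is the norm induced by (K,e) for some e ∈ int(K), and L ∩ int(K) ≠ ∅, then σ(L) = ν(L). -/

import Mathlib

open RealInnerProductSpace

/-- The dual norm `‖u‖* = max_{N x = 1} ⟪u,x⟫`. -/
noncomputable def dualNorm {E : Type*} [NormedAddCommGroup E] [InnerProductSpace ℝ E]
    (N : E → ℝ) (u : E) : ℝ :=
  sSup {r | ∃ x, N x = 1 ∧ r = ⟪u, x⟫}

/-- The dual cone `K* = {u : ⟪u,x⟫ ≥ 0 for all x ∈ K}`. -/
def dualCone {E : Type*} [NormedAddCommGroup E] [InnerProductSpace ℝ E] (K : Set E) :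
    Set E := {u | ∀ x ∈ K, 0 ≤ ⟪u, x⟫}

/-- The norm `‖x‖ₑ = min {α ≥ 0 : x + αe ∈ K, −x + αe ∈ K}` induced by `(K, e)`. -/
noncomputable def inducedNorm {E : Type*} [NormedAddCommGroup E] [InnerProductSpace ℝ E]
    (K : Set E) (e : E) (x : E) : ℝ :=
  sInf {α | 0 ≤ α ∧ x + α • e ∈ K ∧ -x + α • e ∈ K}

/-- `λᵥ(x) = sup {t : x − tv ∈ K}`. -/
noncomputable def lambdaDir {E : Type*} [NormedAddCommGroup E] [InnerProductSpace ℝ E]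
    (K : Set E) (v : E) (x : E) : ℝ :=
  sSup {t | x - t • v ∈ K}

/-- `ν(L) = min {‖u − y‖* : u ∈ K*, y ∈ L^⊥, ‖u‖* = 1}`. -/
noncomputable def nuMeasure {E : Type*} [NormedAddCommGroup E] [InnerProductSpace ℝ E]
    (N : E → ℝ) (K : Set E) (L : Submodule ℝ E) : ℝ :=
  sInf {r | ∃ u y, u ∈ dualCone K ∧ y ∈ Lᗮ ∧ dualNorm N u = 1 ∧ r = dualNorm N (u - y)}

/-- The sigma measure `σ(L) = min_{v ∈ K, N v = 1} max_{x ∈ L, N x ≤ 1} λᵥ(x)`. -/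
noncomputable def sigmaMeasure {E : Type*} [NormedAddCommGroup E] [InnerProductSpace ℝ E]
    (N : E → ℝ) (K : Set E) (L : Submodule ℝ E) : ℝ :=
  sInf {r | ∃ v ∈ K, N v = 1 ∧ r = sSup {t | ∃ x ∈ L, N x ≤ 1 ∧ t = lambdaDir K v x}}

open Pointwise

set_option linter.unusedSectionVars false

section Aux
variable {E : Type*} [NormedAddCommGroup E] [InnerProductSpace ℝ E] [FiniteDimensional ℝ E]
variable {K : Set E}


lemma K_zero (hKcone : ∀ ⦃c : ℝ⦄, 0 ≤ c → ∀ ⦃x⦄, x ∈ K → c • x ∈ K)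
    {e : E} (he : e ∈ interior K) : (0:E) ∈ K := by
  have := hKcone le_rfl (interior_subset he)
  simpa using this

lemma K_add (hKconv : Convex ℝ K)
    (hKcone : ∀ ⦃c : ℝ⦄, 0 ≤ c → ∀ ⦃x⦄, x ∈ K → c • x ∈ K)
    {x y : E} (hx : x ∈ K) (hy : y ∈ K) : x + y ∈ K := by
  have h := hKconv hx hy (by norm_num : (0:ℝ) ≤ 1/2) (by norm_num : (0:ℝ) ≤ 1/2) (by norm_num)
  have h2 := hKcone (by norm_num : (0:ℝ) ≤ 2) h
  have : (2:ℝ) • ((1/2:ℝ) • x + (1/2:ℝ) • y) = x + y := by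
    rw [smul_add, smul_smul, smul_smul]; norm_num
  rwa [this] at h2

lemma interior_ball {e : E} (he : e ∈ interior K) :
    ∃ δ > 0, ∀ z : E, ‖z‖ < δ → e + z ∈ K := by
  rw [mem_interior_iff_mem_nhds, Metric.mem_nhds_iff] at he
  obtain ⟨δ, hδ, hb⟩ := he
  refine ⟨δ, hδ, fun z hz => hb ?_⟩
  simp [Metric.mem_ball, dist_eq_norm, hz]

lemma setA_nonempty (hKcone : ∀ ⦃c : ℝ⦄, 0 ≤ c → ∀ ⦃x⦄, x ∈ K → c • x ∈ K)
    {e : E} (he : e ∈ interior K) (x : E) :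
    ∃ α : ℝ, α ∈ {α | 0 ≤ α ∧ x + α • e ∈ K ∧ -x + α • e ∈ K} := by
  obtain ⟨δ, hδ, hb⟩ := interior_ball he
  set α : ℝ := (‖x‖ + 1)/δ with hα
  have hαpos : 0 < α := by positivity
  have key : ∀ w : E, ‖w‖ ≤ ‖x‖ → w + α • e ∈ K := by
    intro w hw
    have h1 : ‖α⁻¹ • w‖ < δ := by
      rw [norm_smul, Real.norm_eq_abs, abs_of_pos (inv_pos.2 hαpos)]
      rw [hα, inv_div]
      calc δ / (‖x‖ + 1) * ‖w‖ ≤ δ / (‖x‖ + 1) * ‖x‖ := by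
            apply mul_le_mul_of_nonneg_left hw; positivity
        _ < δ := by
            have hlt : ‖x‖ / (‖x‖ + 1) < 1 := by
              rw [div_lt_one (by positivity)]; linarith [norm_nonneg x]
            calc δ / (‖x‖ + 1) * ‖x‖ = ‖x‖ / (‖x‖ + 1) * δ := by ring
              _ < 1 * δ := by exact mul_lt_mul_of_pos_right hlt hδ
              _ = δ := one_mul δ
    have h2 : e + α⁻¹ • w ∈ K := hb _ h1
    have h3 := hKcone hαpos.le h2
    rw [smul_add, smul_smul, mul_inv_cancel₀ hαpos.ne', one_smul] at h3
    rwa [add_comm] at h3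
  exact ⟨α, hαpos.le, key x le_rfl, key (-x) (by simp)⟩

lemma setA_closed (hKclosed : IsClosed K) (e x : E) :
    IsClosed {α : ℝ | 0 ≤ α ∧ x + α • e ∈ K ∧ -x + α • e ∈ K} := by
  have h1 : IsClosed {α : ℝ | 0 ≤ α} := isClosed_Ici
  have h2 : IsClosed {α : ℝ | x + α • e ∈ K} :=
    IsClosed.preimage (by continuity) hKclosed
  have h3 : IsClosed {α : ℝ | -x + α • e ∈ K} :=
    IsClosed.preimage (by continuity) hKclosed
  exact h1.inter (h2.inter h3)


variable (hKclosed : IsClosed K) (hKconv : Convex ℝ K)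
    (hKcone : ∀ ⦃c : ℝ⦄, 0 ≤ c → ∀ ⦃x⦄, x ∈ K → c • x ∈ K)
    (hKpointed : ∀ x ∈ K, -x ∈ K → x = 0)
    {e : E} (he : e ∈ interior K)

include hKclosed hKconv hKcone hKpointed he

lemma iN_mem (x : E) : 0 ≤ inducedNorm K e x ∧
    x + inducedNorm K e x • e ∈ K ∧ -x + inducedNorm K e x • e ∈ K := by
  have h := (setA_closed hKclosed e x).csInf_mem
    (setA_nonempty hKcone he x) ⟨0, fun a ha => ha.1⟩
  exact h

lemma iN_nonneg (x : E) : 0 ≤ inducedNorm K e x := (iN_mem hKclosed hKconv hKcone hKpointed he x).1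

lemma iN_le {c : ℝ} {x : E} (hc : 0 ≤ c) (h1 : x + c • e ∈ K) (h2 : -x + c • e ∈ K) :
    inducedNorm K e x ≤ c :=
  csInf_le ⟨0, fun a ha => ha.1⟩ ⟨hc, h1, h2⟩

lemma iN_le_mem {c : ℝ} {x : E} (hc : inducedNorm K e x ≤ c) :
    x + c • e ∈ K ∧ -x + c • e ∈ K := by
  obtain ⟨h0, h1, h2⟩ := iN_mem hKclosed hKconv hKcone hKpointed he x
  have hce : (c - inducedNorm K e x) • e ∈ K :=
    hKcone (sub_nonneg.2 hc) (interior_subset he)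
  constructor
  · have := K_add hKconv hKcone h1 hce
    have heq : x + inducedNorm K e x • e + (c - inducedNorm K e x) • e = x + c • e := by
      rw [sub_smul]; abel
    rwa [heq] at this
  · have := K_add hKconv hKcone h2 hce
    have heq : -x + inducedNorm K e x • e + (c - inducedNorm K e x) • e = -x + c • e := by
      rw [sub_smul]; abel
    rwa [heq] at this

lemma iN_neg (x : E) : inducedNorm K e (-x) = inducedNorm K e x := by
  unfold inducedNorm
  congr 1
  ext α
  simp only [Set.mem_setOf_eq, neg_neg]
  tauto

lemma iN_zero : inducedNorm K e 0 = 0 := by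
  have h1 : inducedNorm K e 0 ≤ 0 :=
    iN_le hKclosed hKconv hKcone hKpointed he le_rfl (by simpa using K_zero hKcone he) (by simpa using K_zero hKcone he)
  exact le_antisymm h1 (iN_nonneg hKclosed hKconv hKcone hKpointed he 0)

lemma iN_eq_zero {x : E} (h : inducedNorm K e x = 0) : x = 0 := by
  obtain ⟨_, h1, h2⟩ := iN_mem hKclosed hKconv hKcone hKpointed he x
  rw [h, zero_smul, add_zero] at h1 h2
  exact hKpointed x h1 h2

lemma e_ne_zero [Nontrivial E] : e ≠ 0 := by
  intro h
  obtain ⟨δ, hδ, hb⟩ := interior_ball he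
  obtain ⟨z, hz⟩ := exists_ne (0:E)
  have hz0 : 0 < ‖z‖ := norm_pos_iff.2 hz
  set w := (δ/(2*‖z‖)) • z with hw
  have hwn : ‖w‖ < δ := by
    rw [hw, norm_smul, Real.norm_eq_abs, abs_of_pos (by positivity)]
    rw [div_mul_eq_mul_div, mul_comm]
    rw [div_lt_iff₀ (by positivity)]
    have : ‖z‖ > 0 := norm_pos_iff.2 hz
    nlinarith
  have h1 : w ∈ K := by have := hb w hwn; rwa [h, zero_add] at this
  have h2 : -w ∈ K := by have := hb (-w) (by simpa using hwn); rwa [h, zero_add] at this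
  have := hKpointed w h1 h2
  rw [hw] at this
  have : z = 0 := by
    rcases smul_eq_zero.1 this with h' | h'
    · exfalso
      have : ‖z‖ > 0 := norm_pos_iff.2 hz
      rw [div_eq_zero_iff] at h'
      rcases h' with h' | h'
      · exact absurd h' hδ.ne'
      · nlinarith
    · exact h'
  exact hz this

lemma iN_e [Nontrivial E] : inducedNorm K e e = 1 := by
  have he' : e ∈ K := interior_subset he
  have h1 : inducedNorm K e e ≤ 1 := by
    apply iN_le hKclosed hKconv hKcone hKpointed he zero_le_one
    · have := K_add hKconv hKcone he' he'
      rwa [one_smul]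
    · simpa using K_zero hKcone he
  obtain ⟨h0, _, h2⟩ := iN_mem hKclosed hKconv hKcone hKpointed he e
  set t := inducedNorm K e e with ht
  have he2 : -e + t • e = -((1-t) • e) := by rw [sub_smul, one_smul]; abel
  have h3 : -((1-t)•e) ∈ K := by rwa [he2] at h2
  have h4 : (1-t)•e ∈ K := hKcone (sub_nonneg.2 h1) he'
  have h5 := hKpointed _ h4 h3
  rcases smul_eq_zero.1 h5 with h' | h'
  · linarith [sub_eq_zero.1 h']
  · exact absurd h' (e_ne_zero hKclosed hKconv hKcone hKpointed he)

lemma iN_add (x y : E) :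
    inducedNorm K e (x + y) ≤ inducedNorm K e x + inducedNorm K e y := by
  obtain ⟨hx0, hx1, hx2⟩ := iN_mem hKclosed hKconv hKcone hKpointed he x
  obtain ⟨hy0, hy1, hy2⟩ := iN_mem hKclosed hKconv hKcone hKpointed he y
  apply iN_le hKclosed hKconv hKcone hKpointed he (by linarith)
  · have := K_add hKconv hKcone hx1 hy1
    have heq : x + inducedNorm K e x • e + (y + inducedNorm K e y • e)
        = x + y + (inducedNorm K e x + inducedNorm K e y) • e := by
      rw [add_smul]; abel
    rwa [heq] at this
  · have := K_add hKconv hKcone hx2 hy2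
    have heq : -x + inducedNorm K e x • e + (-y + inducedNorm K e y • e)
        = -(x + y) + (inducedNorm K e x + inducedNorm K e y) • e := by
      rw [add_smul]; abel
    rwa [heq] at this

lemma iN_smul {c : ℝ} (hc : 0 < c) (x : E) :
    inducedNorm K e (c • x) = c * inducedNorm K e x := by
  have key : ∀ (d : ℝ) (y : E), 0 < d →
      inducedNorm K e (d • y) ≤ d * inducedNorm K e y := by
    intro d y hd
    obtain ⟨h0, h1, h2⟩ := iN_mem hKclosed hKconv hKcone hKpointed he y
    apply iN_le hKclosed hKconv hKcone hKpointed he (by positivity)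
    · have := hKcone hd.le h1
      have heq : d • (y + inducedNorm K e y • e) = d • y + (d * inducedNorm K e y) • e := by
        rw [smul_add, smul_smul]
      rwa [heq] at this
    · have := hKcone hd.le h2
      have heq : d • (-y + inducedNorm K e y • e) = -(d • y) + (d * inducedNorm K e y) • e := by
        rw [smul_add, smul_smul, smul_neg]
      rwa [heq] at this
  have h1 := key c x hc
  have h2 := key c⁻¹ (c • x) (inv_pos.2 hc)
  rw [smul_smul, inv_mul_cancel₀ hc.ne', one_smul] at h2
  have h4 := mul_le_mul_of_nonneg_left h2 hc.le
  rw [← mul_assoc, mul_inv_cancel₀ hc.ne', one_mul] at h4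
  exact le_antisymm h1 h4

lemma exists_R : ∃ R : ℝ, 0 < R ∧ ∀ x : E, inducedNorm K e x ≤ 1 → ‖x‖ ≤ R := by
  by_contra hcon
  push_neg at hcon
  have key : ∀ n : ℕ, ∃ x : E, inducedNorm K e x ≤ 1 ∧ (n:ℝ) + 1 < ‖x‖ := by
    intro n
    obtain ⟨x, hx1, hx2⟩ := hcon ((n:ℝ)+1) (by positivity)
    exact ⟨x, hx1, hx2⟩
  choose x hx1 hx2 using key
  have hsph : ∀ n, ‖x n‖⁻¹ • (x n) ∈ Metric.sphere (0:E) 1 := by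
    intro n
    have h0 : 0 < ‖x n‖ := lt_of_le_of_lt (by positivity) (hx2 n)
    simp [norm_smul, abs_of_pos (inv_pos.2 h0), inv_mul_cancel₀ h0.ne']
  obtain ⟨d, hd, φ, hφ, hlim⟩ := (isCompact_sphere (0:E) 1).tendsto_subseq hsph
  have hnorm : ∀ n : ℕ, (n:ℝ) + 1 < ‖x (φ n)‖ := by
    intro n
    calc (n:ℝ) + 1 ≤ (φ n : ℝ) + 1 := by
          have h := hφ.id_le n
          have : (n:ℝ) ≤ (φ n : ℝ) := Nat.cast_le.2 h
          linarith
      _ < ‖x (φ n)‖ := hx2 (φ n)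
  have hpos : ∀ n : ℕ, (0:ℝ) < ‖x (φ n)‖ := fun n => lt_of_le_of_lt (by positivity) (hnorm n)
  have htop : Filter.Tendsto (fun n => ‖x (φ n)‖) Filter.atTop Filter.atTop := by
    apply Filter.tendsto_atTop_mono (fun n => (hnorm n).le)
    exact Filter.tendsto_atTop_add_const_right _ 1 tendsto_natCast_atTop_atTop
  have hinv : Filter.Tendsto (fun n => ‖x (φ n)‖⁻¹) Filter.atTop (nhds 0) :=
    htop.inv_tendsto_atTop
  have hsmul : Filter.Tendsto (fun n => ‖x (φ n)‖⁻¹ • e) Filter.atTop (nhds 0) := by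
    have := hinv.smul_const e
    rwa [zero_smul] at this
  have hlim' : Filter.Tendsto (fun n => ‖x (φ n)‖⁻¹ • x (φ n)) Filter.atTop (nhds d) := hlim
  have hmem : ∀ n, x (φ n) + e ∈ K ∧ -(x (φ n)) + e ∈ K := by
    intro n
    have := iN_le_mem hKclosed hKconv hKcone hKpointed he (hx1 (φ n))
    rwa [one_smul] at this
  have hdK : d ∈ K := by
    have ht1 : Filter.Tendsto (fun n => ‖x (φ n)‖⁻¹ • (x (φ n) + e))
        Filter.atTop (nhds d) := by
      have h' : Filter.Tendsto (fun n => ‖x (φ n)‖⁻¹ • (x (φ n)) + ‖x (φ n)‖⁻¹ • e)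
          Filter.atTop (nhds (d + 0)) := hlim'.add hsmul
      rw [add_zero] at h'
      exact h'.congr (fun n => (smul_add _ _ _).symm)
    exact hKclosed.mem_of_tendsto ht1
      (Filter.Eventually.of_forall fun n => hKcone (inv_pos.2 (hpos n)).le (hmem n).1)
  have hdK' : -d ∈ K := by
    have ht1 : Filter.Tendsto (fun n => ‖x (φ n)‖⁻¹ • (-(x (φ n)) + e))
        Filter.atTop (nhds (-d)) := by
      have h' : Filter.Tendsto (fun n => -(‖x (φ n)‖⁻¹ • (x (φ n))) + ‖x (φ n)‖⁻¹ • e)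
          Filter.atTop (nhds (-d + 0)) := hlim'.neg.add hsmul
      rw [add_zero] at h'
      refine h'.congr (fun n => ?_)
      rw [smul_add, smul_neg]
    exact hKclosed.mem_of_tendsto ht1
      (Filter.Eventually.of_forall fun n => hKcone (inv_pos.2 (hpos n)).le (hmem n).2)
  have := hKpointed d hdK hdK'
  rw [this] at hd
  simp at hd

lemma dual_bddAbove (w : E) :
    BddAbove {r | ∃ x, inducedNorm K e x = 1 ∧ r = ⟪w, x⟫} := by
  obtain ⟨R, hR, hRb⟩ := exists_R hKclosed hKconv hKcone hKpointed he
  refine ⟨‖w‖ * R, fun r hr => ?_⟩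
  obtain ⟨x, hx, rfl⟩ := hr
  calc ⟪w, x⟫ ≤ ‖w‖ * ‖x‖ := real_inner_le_norm w x
    _ ≤ ‖w‖ * R := mul_le_mul_of_nonneg_left (hRb x hx.le) (norm_nonneg w)

lemma dual_nonneg [Nontrivial E] (w : E) :
    0 ≤ dualNorm (inducedNorm K e) w := by
  apply Real.sSup_nonneg'
  rcases le_or_gt 0 ⟪w, e⟫ with h | h
  · exact ⟨⟪w, e⟫, ⟨e, iN_e hKclosed hKconv hKcone hKpointed he, rfl⟩, h⟩
  · refine ⟨⟪w, -e⟫, ⟨-e, ?_, rfl⟩, ?_⟩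
    · rw [iN_neg hKclosed hKconv hKcone hKpointed he]
      exact iN_e hKclosed hKconv hKcone hKpointed he
    · rw [inner_neg_right]; linarith

lemma dual_ineq [Nontrivial E] (w x : E) :
    ⟪w, x⟫ ≤ dualNorm (inducedNorm K e) w * inducedNorm K e x := by
  rcases eq_or_lt_of_le (iN_nonneg hKclosed hKconv hKcone hKpointed he x) with h | h
  · have hx0 : x = 0 := iN_eq_zero hKclosed hKconv hKcone hKpointed he h.symm
    rw [hx0, inner_zero_right]
    exact mul_nonneg (dual_nonneg hKclosed hKconv hKcone hKpointed he w)
      (iN_nonneg hKclosed hKconv hKcone hKpointed he 0)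
  · have h1 : inducedNorm K e ((inducedNorm K e x)⁻¹ • x) = 1 := by
      rw [iN_smul hKclosed hKconv hKcone hKpointed he (inv_pos.2 h), inv_mul_cancel₀ h.ne']
    have h2 : ⟪w, (inducedNorm K e x)⁻¹ • x⟫ ≤ dualNorm (inducedNorm K e) w :=
      le_csSup (dual_bddAbove hKclosed hKconv hKcone hKpointed he w) ⟨_, h1, rfl⟩
    rw [real_inner_smul_right] at h2
    have h3 := mul_le_mul_of_nonneg_left h2 h.le
    rw [← mul_assoc, mul_inv_cancel₀ h.ne', one_mul] at h3
    linarith [h3]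

lemma dual_smul [Nontrivial E] {c : ℝ} (hc : 0 ≤ c) (w : E) :
    dualNorm (inducedNorm K e) (c • w) = c * dualNorm (inducedNorm K e) w := by
  have hset : {r | ∃ x, inducedNorm K e x = 1 ∧ r = ⟪c • w, x⟫}
      = c • {r | ∃ x, inducedNorm K e x = 1 ∧ r = ⟪w, x⟫} := by
    ext r
    constructor
    · rintro ⟨x, hx, rfl⟩
      exact ⟨⟪w, x⟫, ⟨x, hx, rfl⟩, by rw [real_inner_smul_left]; rfl⟩
    · rintro ⟨r', ⟨x, hx, rfl⟩, rfl⟩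
      exact ⟨x, hx, by rw [real_inner_smul_left]; rfl⟩
  rw [dualNorm, hset, Real.sSup_smul_of_nonneg hc, smul_eq_mul]
  rfl

lemma dual_Kstar [Nontrivial E] {u : E} (hu : u ∈ dualCone K) :
    dualNorm (inducedNorm K e) u = ⟪u, e⟫ := by
  apply le_antisymm
  · apply csSup_le
    · exact ⟨⟪u, e⟫, ⟨e, iN_e hKclosed hKconv hKcone hKpointed he, rfl⟩⟩
    rintro r ⟨x, hx, rfl⟩
    have h1 := (iN_le_mem hKclosed hKconv hKcone hKpointed he hx.le).2
    rw [one_smul] at h1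
    have h2 := hu _ h1
    rw [inner_add_right, inner_neg_right] at h2
    linarith
  · exact le_csSup (dual_bddAbove hKclosed hKconv hKcone hKpointed he u)
      ⟨e, iN_e hKclosed hKconv hKcone hKpointed he, rfl⟩

lemma dualCone_smul {u : E} (hu : u ∈ dualCone K) {c : ℝ} (hc : 0 ≤ c) :
    c • u ∈ dualCone K := by
  intro x hx
  rw [real_inner_smul_left]
  exact mul_nonneg hc (hu x hx)

lemma cone_sep {c : ℝ} {f : E →L[ℝ] ℝ} (hc : ∀ b ∈ K, c < f b) :
    c < 0 ∧ ∀ b ∈ K, 0 ≤ f b := by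
  have h0 : c < 0 := by have := hc 0 (K_zero hKcone he); simpa using this
  refine ⟨h0, fun b hb => ?_⟩
  by_contra hneg
  push_neg at hneg
  have ht : 0 ≤ (c - 1) / f b := by
    rw [div_nonneg_iff]
    right
    constructor <;> linarith
  have h1 := hc _ (hKcone ht hb)
  rw [map_smul, smul_eq_mul, div_mul_cancel₀ _ (ne_of_lt hneg)] at h1
  linarith

lemma exists_posfun {v : E} (hv : v ∈ K) (hv0 : v ≠ 0) :
    ∃ u, u ∈ dualCone K ∧ 0 < ⟪u, v⟫ := by
  have hnv : -v ∉ K := fun h => hv0 (hKpointed v hv h)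
  obtain ⟨f, c, hc1, hc2⟩ := geometric_hahn_banach_point_closed hKconv hKclosed hnv
  obtain ⟨hc0, hf⟩ := cone_sep hKclosed hKconv hKcone hKpointed he hc2
  refine ⟨(InnerProductSpace.toDual ℝ E).symm f, fun b hb => ?_, ?_⟩
  · rw [InnerProductSpace.toDual_symm_apply]
    exact hf b hb
  · rw [InnerProductSpace.toDual_symm_apply]
    rw [map_neg] at hc1
    linarith

lemma lambda_le_div {v u : E} (hu : u ∈ dualCone K) (huv : 0 < ⟪u, v⟫) {x : E} {t : ℝ}
    (ht : x - t • v ∈ K) : t ≤ ⟪u, x⟫ / ⟪u, v⟫ := by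
  have h0 := hu _ ht
  rw [inner_sub_right, real_inner_smul_right] at h0
  rw [le_div_iff₀ huv]
  linarith

lemma lambdaDir_le_div {v u : E} (hu : u ∈ dualCone K) (huv : 0 < ⟪u, v⟫) (x : E) :
    lambdaDir K v x ≤ max (⟪u, x⟫ / ⟪u, v⟫) 0 := by
  rcases Set.eq_empty_or_nonempty {t : ℝ | x - t • v ∈ K} with hT | hT
  · rw [lambdaDir, hT, Real.sSup_empty]
    exact le_max_right _ _
  · exact le_trans (csSup_le hT (fun t ht => lambda_le_div hKclosed hKconv hKcone hKpointed he hu huv ht)) (le_max_left _ _)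

lemma lambda_zero {v : E} (hv : v ∈ K) (hv0 : v ≠ 0) : lambdaDir K v 0 = 0 := by
  have hset : {t : ℝ | (0:E) - t • v ∈ K} = Set.Iic 0 := by
    ext t
    simp only [Set.mem_setOf_eq, Set.mem_Iic, zero_sub, ← neg_smul]
    constructor
    · intro ht
      by_contra hpos
      push_neg at hpos
      have h1 : t • v ∈ K := hKcone hpos.le hv
      have h2 : -(t • v) ∈ K := by rwa [← neg_smul]
      have := hKpointed _ h1 h2
      rcases smul_eq_zero.1 this with h | h
      · exact absurd h (ne_of_gt hpos)
      · exact hv0 h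
    · intro ht
      exact hKcone (neg_nonneg.2 ht) hv
  rw [lambdaDir, hset, csSup_Iic]

lemma Te_nonempty (x : E) : ∃ t : ℝ, x - t • e ∈ K := by
  obtain ⟨α, hα⟩ := setA_nonempty hKcone he x
  exact ⟨-α, by rw [neg_smul, sub_neg_eq_add]; exact hα.2.1⟩

lemma iN_smul_le {c : ℝ} (hc : 0 ≤ c) (x : E) :
    inducedNorm K e (c • x) ≤ c * inducedNorm K e x := by
  rcases eq_or_lt_of_le hc with h | h
  · rw [← h, zero_smul, zero_mul, iN_zero hKclosed hKconv hKcone hKpointed he]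
  · rw [iN_smul hKclosed hKconv hKcone hKpointed he h]

lemma ball_convex : Convex ℝ {x : E | inducedNorm K e x ≤ 1} := by
  intro a ha b hb p q hp hq hpq
  have h1 := iN_add hKclosed hKconv hKcone hKpointed he (p • a) (q • b)
  have h2 := iN_smul_le hKclosed hKconv hKcone hKpointed he hp a
  have h3 := iN_smul_le hKclosed hKconv hKcone hKpointed he hq b
  have ha' : inducedNorm K e a ≤ 1 := ha
  have hb' : inducedNorm K e b ≤ 1 := hb
  have : inducedNorm K e (p • a + q • b) ≤ p * 1 + q * 1 := by
    nlinarith [iN_nonneg hKclosed hKconv hKcone hKpointed he a,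
      iN_nonneg hKclosed hKconv hKcone hKpointed he b]
  simpa [hpq] using this.trans (by linarith)

lemma ball_closed : IsClosed {x : E | inducedNorm K e x ≤ 1} := by
  have hset : {x : E | inducedNorm K e x ≤ 1} = {x : E | x + e ∈ K} ∩ {x : E | -x + e ∈ K} := by
    ext x
    constructor
    · intro hx
      have := iN_le_mem hKclosed hKconv hKcone hKpointed he hx
      rw [one_smul] at this
      exact this
    · rintro ⟨h1, h2⟩
      have := iN_le hKclosed hKconv hKcone hKpointed he (c := 1) (x := x) zero_le_one
        (by rwa [one_smul]) (by rwa [one_smul])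
      exact this
  rw [hset]
  exact (IsClosed.preimage (by continuity) hKclosed).inter
    (IsClosed.preimage (by continuity) hKclosed)


lemma sigma_set_nonneg (L : Submodule ℝ E) :
    ∀ r ∈ {r | ∃ v ∈ K, inducedNorm K e v = 1 ∧
      r = sSup {t | ∃ x ∈ L, inducedNorm K e x ≤ 1 ∧ t = lambdaDir K v x}}, 0 ≤ r := by
  rintro r ⟨v, hv, hNv, rfl⟩
  have hv0 : v ≠ 0 := by
    intro h
    rw [h, iN_zero hKclosed hKconv hKcone hKpointed he] at hNv
    exact zero_ne_one hNv
  apply Real.sSup_nonneg'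
  refine ⟨lambdaDir K v 0, ⟨0, L.zero_mem, ?_, rfl⟩, ?_⟩
  · rw [iN_zero hKclosed hKconv hKcone hKpointed he]
    exact zero_le_one
  · rw [lambda_zero hKclosed hKconv hKcone hKpointed he hv hv0]

lemma nu_set_nonneg [Nontrivial E] (L : Submodule ℝ E) :
    ∀ r ∈ {r | ∃ u y, u ∈ dualCone K ∧ y ∈ Lᗮ ∧ dualNorm (inducedNorm K e) u = 1 ∧
      r = dualNorm (inducedNorm K e) (u - y)}, 0 ≤ r := by
  rintro r ⟨u, y, _, _, _, rfl⟩
  exact dual_nonneg hKclosed hKconv hKcone hKpointed he _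

lemma sigma_le_nu_elem [Nontrivial E] (L : Submodule ℝ E) {r : ℝ}
    (hr : r ∈ {r | ∃ u y, u ∈ dualCone K ∧ y ∈ Lᗮ ∧ dualNorm (inducedNorm K e) u = 1 ∧
      r = dualNorm (inducedNorm K e) (u - y)}) :
    sigmaMeasure (inducedNorm K e) K L ≤ r := by
  obtain ⟨u, y, hu, hy, hNu, rfl⟩ := hr
  have hr0 : 0 ≤ dualNorm (inducedNorm K e) (u - y) :=
    dual_nonneg hKclosed hKconv hKcone hKpointed he _
  have hue : ⟪u, e⟫ = 1 := by
    rw [← dual_Kstar hKclosed hKconv hKcone hKpointed he hu]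
    exact hNu
  have h0mem : lambdaDir K e 0 ∈ {t | ∃ x ∈ L, inducedNorm K e x ≤ 1 ∧ t = lambdaDir K e x} := by
    refine ⟨0, L.zero_mem, ?_, rfl⟩
    rw [iN_zero hKclosed hKconv hKcone hKpointed he]
    exact zero_le_one
  have hse : sSup {t | ∃ x ∈ L, inducedNorm K e x ≤ 1 ∧ t = lambdaDir K e x}
      ≤ dualNorm (inducedNorm K e) (u - y) := by
    apply csSup_le ⟨_, h0mem⟩
    rintro t ⟨x, hxL, hx1, rfl⟩
    obtain ⟨t0, ht0⟩ := Te_nonempty hKclosed hKconv hKcone hKpointed he x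
    apply csSup_le ⟨t0, ht0⟩
    intro s hs
    have h1 := hu _ hs
    rw [inner_sub_right, real_inner_smul_right, hue, mul_one] at h1
    have hyx : ⟪y, x⟫ = 0 := by
      rw [real_inner_comm]
      exact (Submodule.mem_orthogonal L y).1 hy x hxL
    have h2 : ⟪u, x⟫ = ⟪u - y, x⟫ := by
      rw [inner_sub_left, hyx, sub_zero]
    have h3 : ⟪u - y, x⟫ ≤ dualNorm (inducedNorm K e) (u - y) * inducedNorm K e x :=
      dual_ineq hKclosed hKconv hKcone hKpointed he _ _
    have h4 : dualNorm (inducedNorm K e) (u - y) * inducedNorm K e x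
        ≤ dualNorm (inducedNorm K e) (u - y) * 1 :=
      mul_le_mul_of_nonneg_left hx1 hr0
    rw [Set.mem_setOf_eq] at hs
    linarith
  refine le_trans (csInf_le ⟨0, fun r' hr' =>
    sigma_set_nonneg hKclosed hKconv hKcone hKpointed he L r' hr'⟩ ?_) hse
  exact ⟨e, interior_subset he, iN_e hKclosed hKconv hKcone hKpointed he, rfl⟩

lemma nu_le_sigma_elem [Nontrivial E] (L : Submodule ℝ E) {r : ℝ}
    (hr : r ∈ {r | ∃ v ∈ K, inducedNorm K e v = 1 ∧
      r = sSup {t | ∃ x ∈ L, inducedNorm K e x ≤ 1 ∧ t = lambdaDir K v x}}) :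
    nuMeasure (inducedNorm K e) K L ≤ r := by
  obtain ⟨v, hvK, hNv, rfl⟩ := hr
  set N := inducedNorm K e with hN
  set h : ℝ := sSup {t | ∃ x ∈ L, N x ≤ 1 ∧ t = lambdaDir K v x} with hh
  have hv0 : v ≠ 0 := by
    intro h'
    rw [h', hN, iN_zero hKclosed hKconv hKcone hKpointed he] at hNv
    exact zero_ne_one hNv
  obtain ⟨uv, huvK, huvv⟩ := exists_posfun hKclosed hKconv hKcone hKpointed he hvK hv0
  have hh0 : 0 ≤ h :=
    sigma_set_nonneg hKclosed hKconv hKcone hKpointed he L _ ⟨v, hvK, hNv, rfl⟩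
  have hbddT : ∀ x : E, BddAbove {t : ℝ | x - t • v ∈ K} :=
    fun x => ⟨⟪uv, x⟫ / ⟪uv, v⟫, fun t ht =>
      lambda_le_div hKclosed hKconv hKcone hKpointed he huvK huvv ht⟩
  have hbdd : BddAbove {t | ∃ x ∈ L, N x ≤ 1 ∧ t = lambdaDir K v x} := by
    refine ⟨max (dualNorm N uv / ⟪uv, v⟫) 0, ?_⟩
    rintro t ⟨x, hxL, hx1, rfl⟩
    refine le_trans (lambdaDir_le_div hKclosed hKconv hKcone hKpointed he huvK huvv x) ?_
    apply max_le_max_right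
    apply (div_le_div_iff_of_pos_right huvv).2
    calc ⟪uv, x⟫ ≤ dualNorm N uv * N x := dual_ineq hKclosed hKconv hKcone hKpointed he _ _
      _ ≤ dualNorm N uv * 1 := mul_le_mul_of_nonneg_left hx1
          (dual_nonneg hKclosed hKconv hKcone hKpointed he _)
      _ = dualNorm N uv := mul_one _
  apply le_of_forall_pos_le_add
  intro ε hε
  set c : ℝ := h + ε with hc
  have hc0 : 0 < c := by positivity
  set B : Set E := ↑L ∩ {x | N x ≤ 1} with hB
  have hBclosed : IsClosed B :=
    (Submodule.closed_of_finiteDimensional L).inter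
      (ball_closed hKclosed hKconv hKcone hKpointed he)
  obtain ⟨R, hR, hRb⟩ := exists_R hKclosed hKconv hKcone hKpointed he
  have hBbounded : Bornology.IsBounded B := by
    apply (Metric.isBounded_closedBall (x := (0:E)) (r := R)).subset
    rintro x ⟨_, hx⟩
    rw [Metric.mem_closedBall, dist_zero_right]
    exact hRb x hx
  have hBcompact : IsCompact B :=
    hBbounded.isCompact_closure.of_isClosed_subset hBclosed subset_closure
  have hBconvex : Convex ℝ B :=
    (Submodule.convex L).inter (ball_convex hKclosed hKconv hKcone hKpointed he)
  set D : Set E := (fun x => -(c • v) + x) '' B with hD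
  have hDcompact : IsCompact D := hBcompact.image (by continuity)
  have hDconvex : Convex ℝ D := hBconvex.translate _
  have hdisj : Disjoint D K := by
    rw [Set.disjoint_left]
    rintro z ⟨x, ⟨hxL, hx1⟩, rfl⟩ hzK
    have hmem : x - c • v ∈ K := by rwa [sub_eq_neg_add]
    have h1 : c ≤ lambdaDir K v x := le_csSup (hbddT x) hmem
    have h2 : lambdaDir K v x ≤ h := le_csSup hbdd ⟨x, hxL, hx1, rfl⟩
    simp only [hc] at h1
    linarith
  obtain ⟨f, a, b, hfa, hab, hfb⟩ :=
    geometric_hahn_banach_compact_closed hDconvex hDcompact hKconv hKclosed hdisj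
  obtain ⟨hb0, hfK⟩ := cone_sep hKclosed hKconv hKcone hKpointed he hfb
  have ha0 : a < 0 := lt_trans hab hb0
  set w : E := (InnerProductSpace.toDual ℝ E).symm f with hw
  have hwx : ∀ z : E, ⟪w, z⟫ = f z := fun z => InnerProductSpace.toDual_symm_apply
  have hwK : w ∈ dualCone K := fun z hz => by rw [hwx]; exact hfK z hz
  have h0B : (0:E) ∈ B := by
    refine ⟨L.zero_mem, ?_⟩
    show N 0 ≤ 1
    rw [hN, iN_zero hKclosed hKconv hKcone hKpointed he]
    exact zero_le_one
  have hfv : 0 < f v := by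
    have h1 : f (-(c • v) + 0) < a := hfa _ ⟨0, h0B, rfl⟩
    rw [add_zero, map_neg, map_smul, smul_eq_mul] at h1
    nlinarith
  have hwv : 0 < ⟪w, v⟫ := by rw [hwx]; exact hfv
  set u : E := (⟪w, v⟫)⁻¹ • w with hu
  have huK : u ∈ dualCone K :=
    dualCone_smul hKclosed hKconv hKcone hKpointed he hwK (inv_pos.2 hwv).le
  have huv1 : ⟪u, v⟫ = 1 := by
    rw [hu, real_inner_smul_left]
    exact inv_mul_cancel₀ hwv.ne'
  have hub : ∀ x ∈ B, ⟪u, x⟫ ≤ c := by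
    intro x hx
    have h1 : f (-(c • v) + x) < a := hfa _ ⟨x, hx, rfl⟩
    rw [map_add, map_neg, map_smul, smul_eq_mul] at h1
    rw [hu, real_inner_smul_left, hwx, hwx]
    have h2 : f x ≤ c * f v := by linarith
    calc (f v)⁻¹ * f x ≤ (f v)⁻¹ * (c * f v) :=
          mul_le_mul_of_nonneg_left h2 (inv_pos.2 hfv).le
      _ = c := by field_simp
  set g0 : E →ₗ[ℝ] ℝ := (InnerProductSpace.toDual ℝ E u).toLinearMap with hg0
  have hg0x : ∀ z : E, g0 z = ⟪u, z⟫ := fun z => InnerProductSpace.toDual_apply_apply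
  set F := g0.toPMap L with hF
  have hFle : ∀ x : F.domain, F x ≤ c * N (x : E) := by
    intro x
    rw [show F x = g0 (x : E) from rfl, hg0x]
    have hxL : (x : E) ∈ L := x.2
    rcases eq_or_lt_of_le (iN_nonneg hKclosed hKconv hKcone hKpointed he (x : E)) with h' | h'
    · have hx0 : (x : E) = 0 := iN_eq_zero hKclosed hKconv hKcone hKpointed he h'.symm
      rw [hx0, inner_zero_right]
      show (0:ℝ) ≤ c * N 0
      rw [hN, iN_zero hKclosed hKconv hKcone hKpointed he, mul_zero]
    · have hx' : (N (x : E))⁻¹ • (x : E) ∈ B := by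
        refine ⟨L.smul_mem _ hxL, ?_⟩
        show N ((N (x:E))⁻¹ • (x:E)) ≤ 1
        rw [hN, iN_smul hKclosed hKconv hKcone hKpointed he (inv_pos.2 h'),
          inv_mul_cancel₀ (ne_of_gt h')]
      have h2 := hub _ hx'
      rw [real_inner_smul_right] at h2
      have h3 := mul_le_mul_of_nonneg_left h2 h'.le
      rw [← mul_assoc, mul_inv_cancel₀ (ne_of_gt h'), one_mul] at h3
      calc ⟪u, (x:E)⟫ ≤ N (x:E) * c := h3
        _ = c * N (x:E) := mul_comm _ _
  obtain ⟨g, hg_eq, hg_le⟩ := exists_extension_of_le_sublinear F (fun z => c * N z)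
    (fun r hr z => by
      show c * N (r • z) = r * (c * N z)
      rw [hN, iN_smul hKclosed hKconv hKcone hKpointed he hr]
      ring)
    (fun z1 z2 => by
      show c * N (z1 + z2) ≤ c * N z1 + c * N z2
      have h1 := iN_add hKclosed hKconv hKcone hKpointed he z1 z2
      calc c * N (z1 + z2) ≤ c * (N z1 + N z2) := mul_le_mul_of_nonneg_left h1 hc0.le
        _ = c * N z1 + c * N z2 := by ring)
    hFle
  set w2 : E := (InnerProductSpace.toDual ℝ E).symm (LinearMap.toContinuousLinearMap g) with hw2d
  have hw2 : ∀ z : E, ⟪w2, z⟫ = g z := fun z => InnerProductSpace.toDual_symm_apply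
  set y : E := u - w2 with hy
  have hyL : y ∈ Lᗮ := by
    rw [Submodule.mem_orthogonal]
    intro x hx
    have h1 := hg_eq ⟨x, hx⟩
    rw [show F ⟨x, hx⟩ = g0 x from rfl, hg0x] at h1
    rw [real_inner_comm, hy, inner_sub_left, hw2]
    have : g ((⟨x, hx⟩ : L) : E) = g x := rfl
    rw [this] at h1
    rw [h1, sub_self]
  have hdual : dualNorm N (u - y) ≤ c := by
    have huy : u - y = w2 := by rw [hy, sub_sub_cancel]
    rw [huy]
    apply csSup_le
    · exact ⟨⟪w2, e⟫, ⟨e, iN_e hKclosed hKconv hKcone hKpointed he, rfl⟩⟩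
    rintro r ⟨x, hx, rfl⟩
    rw [hw2]
    have h1 := hg_le x
    rw [show N x = 1 from hx, mul_one] at h1
    exact h1
  have hue1 : (1:ℝ) ≤ ⟪u, e⟫ := by
    have hev := (iN_le_mem hKclosed hKconv hKcone hKpointed he (le_of_eq hNv)).2
    rw [one_smul] at hev
    have h1 := huK _ hev
    rw [inner_add_right, inner_neg_right] at h1
    linarith [huv1.ge, huv1.le]
  have hue0 : (0:ℝ) < ⟪u, e⟫ := lt_of_lt_of_le one_pos hue1
  set u1 : E := (⟪u, e⟫)⁻¹ • u with hu1
  set y1 : E := (⟪u, e⟫)⁻¹ • y with hy1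
  have hu1K : u1 ∈ dualCone K :=
    dualCone_smul hKclosed hKconv hKcone hKpointed he huK (inv_pos.2 hue0).le
  have hu1N : dualNorm N u1 = 1 := by
    rw [dual_Kstar hKclosed hKconv hKcone hKpointed he hu1K, hu1, real_inner_smul_left,
      inv_mul_cancel₀ hue0.ne']
  have hy1L : y1 ∈ Lᗮ := Submodule.smul_mem _ _ hyL
  have hfinal : dualNorm N (u1 - y1) ≤ c := by
    have hd : u1 - y1 = (⟪u, e⟫)⁻¹ • (u - y) := by rw [hu1, hy1]; module
    rw [hd, dual_smul hKclosed hKconv hKcone hKpointed he (inv_pos.2 hue0).le]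
    have hinv1 : (⟪u, e⟫)⁻¹ ≤ 1 := inv_le_one_of_one_le₀ hue1
    calc (⟪u, e⟫)⁻¹ * dualNorm N (u - y) ≤ 1 * c :=
          mul_le_mul hinv1 hdual (dual_nonneg hKclosed hKconv hKcone hKpointed he _) zero_le_one
      _ = c := one_mul c
  refine le_trans (csInf_le ⟨0, fun r' hr' =>
    nu_set_nonneg hKclosed hKconv hKcone hKpointed he L r' hr'⟩
    ⟨u1, y1, hu1K, hy1L, hu1N, rfl⟩) hfinal

theorem main_aux (L : Submodule ℝ E) :
    sigmaMeasure (inducedNorm K e) K L = nuMeasure (inducedNorm K e) K L := by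
  rcases subsingleton_or_nontrivial E with hsub | hnt
  · have hσ : {r | ∃ v ∈ K, inducedNorm K e v = 1 ∧
        r = sSup {t | ∃ x ∈ L, inducedNorm K e x ≤ 1 ∧ t = lambdaDir K v x}} = ∅ := by
      ext r
      simp only [Set.mem_setOf_eq, Set.mem_empty_iff_false, iff_false, not_exists]
      rintro v ⟨hv, hNv, -⟩
      have hv0 : v = 0 := Subsingleton.elim v 0
      rw [hv0, iN_zero hKclosed hKconv hKcone hKpointed he] at hNv
      exact zero_ne_one hNv
    have hν : {r | ∃ u y, u ∈ dualCone K ∧ y ∈ Lᗮ ∧ dualNorm (inducedNorm K e) u = 1 ∧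
        r = dualNorm (inducedNorm K e) (u - y)} = ∅ := by
      ext r
      simp only [Set.mem_setOf_eq, Set.mem_empty_iff_false, iff_false, not_exists]
      rintro u y ⟨-, -, hNu, -⟩
      have hset : {r | ∃ x, inducedNorm K e x = 1 ∧ r = ⟪u, x⟫} = ∅ := by
        ext r'
        simp only [Set.mem_setOf_eq, Set.mem_empty_iff_false, iff_false, not_exists]
        rintro x ⟨hx, -⟩
        have hx0 : x = 0 := Subsingleton.elim x 0
        rw [hx0, iN_zero hKclosed hKconv hKcone hKpointed he] at hx
        exact zero_ne_one hx
      rw [dualNorm, hset, Real.sSup_empty] at hNu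
      exact zero_ne_one hNu
    rw [sigmaMeasure, nuMeasure, hσ, hν]
  · apply le_antisymm
    · apply le_csInf
      · obtain ⟨u, huK, hue⟩ := exists_posfun hKclosed hKconv hKcone hKpointed he
          (interior_subset he) (e_ne_zero hKclosed hKconv hKcone hKpointed he)
        have huK' : (⟪u, e⟫)⁻¹ • u ∈ dualCone K :=
          dualCone_smul hKclosed hKconv hKcone hKpointed he huK (inv_pos.2 hue).le
        refine ⟨_, ⟨(⟪u, e⟫)⁻¹ • u, 0, huK', Submodule.zero_mem _, ?_, rfl⟩⟩
        rw [dual_Kstar hKclosed hKconv hKcone hKpointed he huK', real_inner_smul_left,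
          inv_mul_cancel₀ hue.ne']
      · intro r hr
        exact sigma_le_nu_elem hKclosed hKconv hKcone hKpointed he L hr
    · apply le_csInf
      · exact ⟨_, ⟨e, interior_subset he, iN_e hKclosed hKconv hKcone hKpointed he, rfl⟩⟩
      · intro r hr
        exact nu_le_sigma_elem hKclosed hKconv hKcone hKpointed he L hr

end Aux


/-- For the norm induced by `(K, e)`, the sigma measure and the distance to
infeasibility coincide: `σ(L) = ν(L)`. -/
theorem sigma_eq_nu_inducedNorm {E : Type*} [NormedAddCommGroup E]
    [InnerProductSpace ℝ E] [FiniteDimensional ℝ E] (K : Set E)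
    (hKclosed : IsClosed K) (hKconv : Convex ℝ K)
    (hKcone : ∀ ⦃c : ℝ⦄, 0 ≤ c → ∀ ⦃x⦄, x ∈ K → c • x ∈ K)
    (hKpointed : ∀ x ∈ K, -x ∈ K → x = 0)
    (e : E) (he : e ∈ interior K)
    (L : Submodule ℝ E) (hL : (↑L ∩ interior K).Nonempty) :
    sigmaMeasure (inducedNorm K e) K L = nuMeasure (inducedNorm K e) K L :=
  main_aux hKclosed hKconv hKcone hKpointed he L
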